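/- Let J be a 3-dimensional nilpotent commutative ℝ-algebra with basis {n₁, n₂, n₃} and multiplication n₁² = α n₃, n₂² = β n₃, n₁·n₂ = γ n₃, all other products of basis elements zero, with β ≠ 0 and γ² − αβ < 0. Then J is isomorphic to the algebra J₂₄ with multiplication N₁² = N₂² = N₃ and all other products zero. -/

import Mathlib

/-- Nilpotent commutative multiplication on ℝ³ with n₁² = α n₃, n₂² = β n₃,
n₁·n₂ = γ n₃, all other basis products zero. -/
def mulNil (α β γ : ℝ) (x y : ℝ × ℝ × ℝ) : ℝ × ℝ × ℝ :=
  (0, 0, α * (x.1 * y.1) + β * (x.2.1 * y.2.1) + γ * (x.1 * y.2.1 + x.2.1 * y.1))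

/-- Multiplication of J₂₄: n₁² = n₂² = n₃, all other basis products zero. -/
def mulJ24 (x y : ℝ × ℝ × ℝ) : ℝ × ℝ × ℝ :=
  (0, 0, x.1 * y.1 + x.2.1 * y.2.1)

/-- if β ≠ 0 and γ² − αβ < 0 then the nilpotent algebra with
n₁² = α n₃, n₂² = β n₃, n₁·n₂ = γ n₃ is isomorphic to J₂₄. -/
theorem nilpotent_iso_J24 (α β γ : ℝ) (hβ : β ≠ 0) (hΔ : γ ^ 2 - α * β < 0) :
    ∃ φ : (ℝ × ℝ × ℝ) ≃ₗ[ℝ] (ℝ × ℝ × ℝ),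
      ∀ x y : ℝ × ℝ × ℝ, φ (mulNil α β γ x y) = mulJ24 (φ x) (φ y) := by
  have hs2 : 0 < α * β - γ ^ 2 := by linarith
  set s := Real.sqrt (α * β - γ ^ 2) with hsdef
  have hs : 0 < s := Real.sqrt_pos.mpr hs2
  have hs' : s ≠ 0 := ne_of_gt hs
  have hss : s ^ 2 = α * β - γ ^ 2 := Real.sq_sqrt hs2.le
  refine ⟨{ toFun := fun x => (s * x.1 / β, (γ * x.1 + β * x.2.1) / β, x.2.2 / β),
            invFun := fun y => (β * y.1 / s, y.2.1 - γ * y.1 / s, β * y.2.2),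
            map_add' := ?_, map_smul' := ?_, left_inv := ?_, right_inv := ?_ }, ?_⟩
  · intro x y
    refine Prod.ext ?_ (Prod.ext ?_ ?_) <;> simp <;> field_simp <;> ring
  · intro c x
    refine Prod.ext ?_ (Prod.ext ?_ ?_) <;> simp <;> field_simp <;> ring
  · intro x
    refine Prod.ext ?_ (Prod.ext ?_ ?_) <;> simp <;> field_simp <;> ring
  · intro y
    refine Prod.ext ?_ (Prod.ext ?_ ?_) <;> simp <;> field_simp <;> ring
  · intro x y
    simp only [mulNil, mulJ24, LinearEquiv.coe_mk]
    refine Prod.ext ?_ (Prod.ext ?_ ?_)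
    · simp
    · simp
    · simp only [LinearMap.coe_mk, AddHom.coe_mk]
      field_simp
      linear_combination (-x.1 * y.1) * hss
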